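/- An n×n matrix A over a field is invertible if and only if there exists a permutation σ of {1,…,n} and a sequence of matrices A = A⁰, A¹, …, Aⁿ such that for each step t, the pivot entry (A^{t})_{t+1, σ(t+1)} is nonzero and A^{t+1} is obtained from A^t by the dictionary pivot at that position. -/

import Mathlib

set_option linter.unusedSectionVars false
set_option maxHeartbeats 1000000

/-- The dictionary pivot operation at position `(p, k)`: the pivot entry is
reciprocated, the pivot row is divided by the pivot, the pivot column is
divided by the negative of the pivot, and the remaining entries are updated
by the rectangle rule. -/
def dictPivot {n : ℕ} {F : Type*} [Field F]
    (A : Matrix (Fin n) (Fin n) F) (p k : Fin n) : Matrix (Fin n) (Fin n) F :=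
  Matrix.of fun i j =>
    if i = p then
      (if j = k then (A p k)⁻¹ else A p j / A p k)
    else
      (if j = k then -(A i k) / A p k else A i j - A i k * A p j / A p k)

section PivotAux
open Matrix
variable {n : ℕ} {F : Type*} [Field F]

lemma pivot_step (M : Matrix (Fin n) (Fin n) F) (p k : Fin n) (hpk : M p k ≠ 0)
    (z w : Fin n → F) (H : ∀ i, w i + ∑ j, M i j * z j = 0) :
    ∀ i, Function.update w p (z k) i +
      ∑ j, dictPivot M p k i j * Function.update z k (w p) j = 0 := by
  intro i
  have hsplit : ∀ (f : Fin n → F), (∑ j, f j) = f k + ∑ j ∈ Finset.univ.erase k, f j := by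
    intro f
    rw [Finset.add_sum_erase _ f (Finset.mem_univ k)]
  have Hi := H i
  have Hp := H p
  rw [hsplit] at Hi Hp
  by_cases hip : i = p
  · subst hip
    rw [Function.update_self, hsplit]
    rw [Function.update_self]
    simp only [dictPivot, Matrix.of_apply, eq_self_iff_true, if_true]
    have : ∑ j ∈ Finset.univ.erase k, (if j = k then (M i k)⁻¹ else M i j / M i k) *
        Function.update z k (w i) j = (∑ j ∈ Finset.univ.erase k, M i j * z j) / M i k := by
      rw [Finset.sum_div]
      apply Finset.sum_congr rfl
      intro j hj
      have hjk : j ≠ k := Finset.ne_of_mem_erase hj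
      rw [if_neg hjk, Function.update_of_ne hjk]
      field_simp
    rw [this]
    set S := ∑ j ∈ Finset.univ.erase k, M i j * z j with hS
    field_simp
    linear_combination Hi
  · rw [Function.update_of_ne hip, hsplit]
    simp only [dictPivot, Matrix.of_apply, if_neg hip, eq_self_iff_true, if_true]
    have : ∑ j ∈ Finset.univ.erase k, (if j = k then -(M i k) / M p k else M i j - M i k * M p j / M p k) *
        Function.update z k (w p) j
        = (∑ j ∈ Finset.univ.erase k, M i j * z j) - M i k * (∑ j ∈ Finset.univ.erase k, M p j * z j) / M p k := by
      rw [Finset.mul_sum, Finset.sum_div, ← Finset.sum_sub_distrib]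
      apply Finset.sum_congr rfl
      intro j hj
      have hjk : j ≠ k := Finset.ne_of_mem_erase hj
      rw [if_neg hjk, Function.update_of_ne hjk]
      ring
    rw [this, Function.update_self]
    set S1 := ∑ j ∈ Finset.univ.erase k, M i j * z j with hS1
    set S2 := ∑ j ∈ Finset.univ.erase k, M p j * z j with hS2
    field_simp
    linear_combination M p k * Hi - M i k * Hp

noncomputable def zvAux (c : ℕ → Fin n) (t : ℕ) (x y : Fin n → F) : Fin n → F :=
  fun j => if h : ∃ s : Fin n, (s : ℕ) < t ∧ c s = j then y h.choose else x j

def wvAux (c : ℕ → Fin n) (t : ℕ) (x y : Fin n → F) : Fin n → F :=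
  fun i => if (i : ℕ) < t then x (c i) else y i

lemma zvAux_zero (c : ℕ → Fin n) (x y : Fin n → F) : zvAux c 0 x y = x := by
  funext j; simp [zvAux]

lemma wvAux_zero (c : ℕ → Fin n) (x y : Fin n → F) : wvAux c 0 x y = y := by
  funext i; simp [wvAux]

lemma zvAux_succ (c : ℕ → Fin n) (t : ℕ) (ht : t < n) (x y : Fin n → F)
    (hinj : ∀ s1 s2 : Fin n, (s1 : ℕ) < t + 1 → (s2 : ℕ) < t + 1 → c s1 = c s2 → s1 = s2) :
    zvAux c (t + 1) x y =
      Function.update (zvAux c t x y) (c t) (wvAux c t x y ⟨t, ht⟩) := by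
  have hfresh : ∀ s : Fin n, (s : ℕ) < t → c s ≠ c t := by
    intro s hs hcs
    have : s = ⟨t, ht⟩ := hinj s ⟨t, ht⟩ (Nat.lt_succ_of_lt hs) (Nat.lt_succ_self t) hcs
    rw [this] at hs; exact absurd hs (lt_irrefl t)
  funext j
  by_cases hj : j = c t
  · subst hj
    rw [Function.update_self, wvAux, if_neg (lt_irrefl t)]
    have h : ∃ s : Fin n, (s : ℕ) < t + 1 ∧ c s = c t :=
      ⟨⟨t, ht⟩, Nat.lt_succ_self t, rfl⟩
    rw [zvAux, dif_pos h]
    congr 1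
    have hc := h.choose_spec
    by_cases hlt : (h.choose : ℕ) < t
    · exact absurd hc.2 (hfresh _ hlt)
    · have : (h.choose : ℕ) = t := Nat.eq_of_lt_succ_of_not_lt hc.1 hlt
      exact Fin.ext this
  · rw [Function.update_of_ne hj, zvAux, zvAux]
    by_cases h2 : ∃ s : Fin n, (s : ℕ) < t ∧ c s = j
    · have h1 : ∃ s : Fin n, (s : ℕ) < t + 1 ∧ c s = j := by
        obtain ⟨s, hs, hcs⟩ := h2; exact ⟨s, Nat.lt_succ_of_lt hs, hcs⟩
      rw [dif_pos h1, dif_pos h2]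
      congr 1
      have hc1 := h1.choose_spec
      have hc2 := h2.choose_spec
      exact hinj _ _ hc1.1 (Nat.lt_succ_of_lt hc2.1) (hc1.2.trans hc2.2.symm)
    · have h1 : ¬ ∃ s : Fin n, (s : ℕ) < t + 1 ∧ c s = j := by
        rintro ⟨s, hs, hcs⟩
        rcases Nat.lt_succ_iff_lt_or_eq.mp hs with h | h
        · exact h2 ⟨s, h, hcs⟩
        · apply hj; rw [← hcs]; congr 1
      rw [dif_neg h1, dif_neg h2]

lemma wvAux_succ (c : ℕ → Fin n) (t : ℕ) (ht : t < n) (x y : Fin n → F)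
    (hinj : ∀ s1 s2 : Fin n, (s1 : ℕ) < t + 1 → (s2 : ℕ) < t + 1 → c s1 = c s2 → s1 = s2) :
    wvAux c (t + 1) x y =
      Function.update (wvAux c t x y) ⟨t, ht⟩ (zvAux c t x y (c t)) := by
  have hfresh : ∀ s : Fin n, (s : ℕ) < t → c s ≠ c t := by
    intro s hs hcs
    have : s = ⟨t, ht⟩ := hinj s ⟨t, ht⟩ (Nat.lt_succ_of_lt hs) (Nat.lt_succ_self t) hcs
    rw [this] at hs; exact absurd hs (lt_irrefl t)
  funext i
  by_cases hi : i = (⟨t, ht⟩ : Fin n)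
  · subst hi
    rw [Function.update_self, wvAux]
    simp only [Nat.lt_succ_self t, if_pos]
    have h2 : ¬ ∃ s : Fin n, (s : ℕ) < t ∧ c s = c t := by
      rintro ⟨s, hs, hcs⟩; exact hfresh s hs hcs
    rw [zvAux, dif_neg h2]
  · rw [Function.update_of_ne hi, wvAux, wvAux]
    have hne : (i : ℕ) ≠ t := fun h => hi (Fin.ext h)
    by_cases hlt : (i : ℕ) < t
    · rw [if_pos (Nat.lt_succ_of_lt hlt), if_pos hlt]
    · rw [if_neg (fun h => hlt (Nat.lt_of_le_of_ne (Nat.lt_succ_iff.mp h) hne)), if_neg hlt]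

lemma inv_rec (A : Matrix (Fin n) (Fin n) F) (c : ℕ → Fin n)
    (M : ℕ → Matrix (Fin n) (Fin n) F) (hM0 : M 0 = A) :
    ∀ T, T ≤ n →
    (∀ s1 s2 : Fin n, (s1 : ℕ) < T → (s2 : ℕ) < T → c s1 = c s2 → s1 = s2) →
    (∀ t : ℕ, ∀ htn : t < n, t < T →
        M t ⟨t, htn⟩ (c t) ≠ 0 ∧ M (t + 1) = dictPivot (M t) ⟨t, htn⟩ (c t)) →
    ∀ x : Fin n → F, ∀ i,
      wvAux c T x (-(A *ᵥ x)) i + ∑ j, M T i j * zvAux c T x (-(A *ᵥ x)) j = 0 := by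
  intro T
  induction T with
  | zero =>
    intro _ _ _ x i
    rw [zvAux_zero, wvAux_zero, hM0]
    simp [Matrix.mulVec, dotProduct]
  | succ T IH =>
    intro hT1 hinj hstep x i
    have hTn : T < n := Nat.lt_of_succ_le hT1
    have hTn' : T ≤ n := le_of_lt hTn
    have hinj' : ∀ s1 s2 : Fin n, (s1 : ℕ) < T → (s2 : ℕ) < T → c s1 = c s2 → s1 = s2 :=
      fun s1 s2 h1 h2 h3 => hinj s1 s2 (Nat.lt_succ_of_lt h1) (Nat.lt_succ_of_lt h2) h3
    have hstep' : ∀ t : ℕ, ∀ htn : t < n, t < T →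
        M t ⟨t, htn⟩ (c t) ≠ 0 ∧ M (t + 1) = dictPivot (M t) ⟨t, htn⟩ (c t) :=
      fun t htn h => hstep t htn (Nat.lt_succ_of_lt h)
    have Hprev := IH hTn' hinj' hstep' x
    obtain ⟨hnz, hpiv⟩ := hstep T hTn (Nat.lt_succ_self T)
    have key := pivot_step (M T) ⟨T, hTn⟩ (c T) hnz
      (zvAux c T x (-(A *ᵥ x))) (wvAux c T x (-(A *ᵥ x))) Hprev i
    rw [zvAux_succ c T hTn _ _ hinj, wvAux_succ c T hTn _ _ hinj, hpiv]
    exact key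

lemma seq_isUnit (hn : 0 < n) (A : Matrix (Fin n) (Fin n) F)
    (σ : Equiv.Perm (Fin n)) (seq : Fin (n + 1) → Matrix (Fin n) (Fin n) F)
    (h0 : seq 0 = A)
    (hsteps : ∀ t : Fin n, seq t.castSucc t (σ t) ≠ 0 ∧
        seq t.succ = dictPivot (seq t.castSucc) t (σ t)) :
    IsUnit A := by
  set c : ℕ → Fin n := fun s => σ ⟨s % n, Nat.mod_lt s hn⟩ with hc
  have hcs : ∀ s : Fin n, c (s : ℕ) = σ s := by
    intro s
    simp only [hc]
    congr 1
    exact Fin.ext (Nat.mod_eq_of_lt s.isLt)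
  set M : ℕ → Matrix (Fin n) (Fin n) F :=
    fun t => if h : t < n + 1 then seq ⟨t, h⟩ else seq (Fin.last n) with hM
  have hM0 : M 0 = A := by
    simp only [hM, dif_pos (Nat.succ_pos n)]
    rw [← h0]
    congr 1
  have hinj : ∀ s1 s2 : Fin n, (s1 : ℕ) < n → (s2 : ℕ) < n → c s1 = c s2 → s1 = s2 := by
    intro s1 s2 _ _ h
    rw [hcs, hcs] at h
    exact σ.injective h
  have hstep : ∀ t : ℕ, ∀ htn : t < n, t < n →
      M t ⟨t, htn⟩ (c t) ≠ 0 ∧ M (t + 1) = dictPivot (M t) ⟨t, htn⟩ (c t) := by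
    intro t htn _
    obtain ⟨h1, h2⟩ := hsteps ⟨t, htn⟩
    have e1 : M t = seq (Fin.castSucc ⟨t, htn⟩) := by
      simp only [hM, dif_pos (Nat.lt_succ_of_lt htn)]
      congr 1
    have e2 : M (t + 1) = seq (Fin.succ ⟨t, htn⟩) := by
      simp only [hM, dif_pos (Nat.succ_lt_succ htn)]
      congr 1
    have e3 : c t = σ ⟨t, htn⟩ := hcs ⟨t, htn⟩
    constructor
    · rw [e1, e3]; exact h1
    · rw [e1, e2, e3]; exact h2
  have key := inv_rec A c M hM0 n le_rfl hinj hstep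
  have hker : ∀ x : Fin n → F, A *ᵥ x = 0 → x = 0 := by
    intro x hx
    have hy : -(A *ᵥ x) = 0 := by rw [hx]; simp
    have hz : ∀ j, zvAux c n x (-(A *ᵥ x)) j = 0 := by
      intro j
      have hex : ∃ s : Fin n, (s : ℕ) < n ∧ c s = j :=
        ⟨σ.symm j, (σ.symm j).isLt, by rw [hcs]; exact σ.apply_symm_apply j⟩
      rw [zvAux, dif_pos hex, hy]
      rfl
    have hxs : ∀ i : Fin n, x (σ i) = 0 := by
      intro i
      have := key x i
      rw [wvAux] at this
      rw [if_pos i.isLt] at this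
      have hsum : ∑ j, M n i j * zvAux c n x (-(A *ᵥ x)) j = 0 := by
        apply Finset.sum_eq_zero
        intro j _
        rw [hz j, mul_zero]
      rw [hsum, add_zero, hcs] at this
      exact this
    funext j
    have := hxs (σ.symm j)
    rwa [σ.apply_symm_apply] at this
  have hdet : A.det ≠ 0 := by
    intro hd
    obtain ⟨v, hv, hAv⟩ := (Matrix.exists_mulVec_eq_zero_iff.mpr hd)
    exact hv (hker v hAv)
  exact (Matrix.isUnit_iff_isUnit_det A).mpr (isUnit_iff_ne_zero.mpr hdet)

open scoped Classical in
/-- The recursive pivoting process: state after `t` steps is the current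
matrix together with the record of pivot columns chosen so far. -/
noncomputable def pivState (hn : 0 < n) (A : Matrix (Fin n) (Fin n) F) :
    ℕ → Matrix (Fin n) (Fin n) F × (ℕ → Fin n)
  | 0 => (A, fun _ => ⟨0, hn⟩)
  | (t + 1) =>
      let P := pivState hn A t
      if ht : t < n then
        if h : ∃ k : Fin n, (∀ s : Fin n, (s : ℕ) < t → P.2 s ≠ k) ∧ P.1 ⟨t, ht⟩ k ≠ 0 then
          (dictPivot P.1 ⟨t, ht⟩ h.choose, Function.update P.2 t h.choose)
        else P
      else P

/-- Step `t` of the pivoting process succeeds. -/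
abbrev pivGood (hn : 0 < n) (A : Matrix (Fin n) (Fin n) F) (t : ℕ) (ht : t < n) : Prop :=
  ∃ k : Fin n, (∀ s : Fin n, (s : ℕ) < t → (pivState hn A t).2 s ≠ k) ∧
    (pivState hn A t).1 ⟨t, ht⟩ k ≠ 0

lemma pivState_succ_of_good (hn : 0 < n) (A : Matrix (Fin n) (Fin n) F) (t : ℕ) (ht : t < n)
    (hg : pivGood hn A t ht) :
    pivState hn A (t + 1) =
      (dictPivot (pivState hn A t).1 ⟨t, ht⟩ hg.choose,
        Function.update (pivState hn A t).2 t hg.choose) := by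
  classical
  rw [pivState]
  simp only [dif_pos ht, dif_pos hg]

lemma pivState_c_stable (hn : 0 < n) (A : Matrix (Fin n) (Fin n) F) :
    ∀ T t, t ≤ T → ∀ s : ℕ, s < t → (pivState hn A T).2 s = (pivState hn A t).2 s := by
  intro T
  induction T with
  | zero =>
    intro t ht s hs
    exact absurd hs (by omega)
  | succ T IH =>
    intro t ht s hs
    by_cases hT : t = T + 1
    · subst hT; rfl
    have ht' : t ≤ T := by omega
    have hsT : s ≠ T := by omega
    have hstep : (pivState hn A (T + 1)).2 s = (pivState hn A T).2 s := by
      classical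
      rw [pivState]
      by_cases h1 : T < n
      · simp only [dif_pos h1]
        by_cases h2 : ∃ k : Fin n, (∀ s' : Fin n, (s' : ℕ) < T →
            (pivState hn A T).2 s' ≠ k) ∧ (pivState hn A T).1 ⟨T, h1⟩ k ≠ 0
        · simp only [dif_pos h2, Function.update_of_ne hsT]
        · simp only [dif_neg h2]
      · simp only [dif_neg h1]
    rw [hstep]
    exact IH t ht' s hs

lemma pivC_spec (hn : 0 < n) (A : Matrix (Fin n) (Fin n) F) (s : ℕ) (hsn : s < n)
    (hg : pivGood hn A s hsn) : (pivState hn A n).2 s = hg.choose := by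
  have h1 : (pivState hn A n).2 s = (pivState hn A (s + 1)).2 s :=
    pivState_c_stable hn A n (s + 1) (Nat.succ_le_of_lt hsn) s (Nat.lt_succ_self s)
  rw [h1, pivState_succ_of_good hn A s hsn hg]
  simp

lemma pivP1 (hn : 0 < n) (A : Matrix (Fin n) (Fin n) F) (s : ℕ) (hsn : s < n)
    (hg : pivGood hn A s hsn) :
    (pivState hn A (s + 1)).1 =
      dictPivot (pivState hn A s).1 ⟨s, hsn⟩ ((pivState hn A n).2 s) := by
  rw [pivState_succ_of_good hn A s hsn hg, pivC_spec hn A s hsn hg]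

lemma pivP2 (hn : 0 < n) (A : Matrix (Fin n) (Fin n) F) (s : ℕ) (hsn : s < n)
    (hg : pivGood hn A s hsn) :
    (pivState hn A s).1 ⟨s, hsn⟩ ((pivState hn A n).2 s) ≠ 0 := by
  rw [pivC_spec hn A s hsn hg]
  exact hg.choose_spec.2

lemma pivP3 (hn : 0 < n) (A : Matrix (Fin n) (Fin n) F) (s : ℕ) (hsn : s < n)
    (hg : pivGood hn A s hsn) (s' : Fin n) (hs' : (s' : ℕ) < s) :
    (pivState hn A n).2 (s' : ℕ) ≠ (pivState hn A n).2 s := by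
  rw [pivC_spec hn A s hsn hg]
  have h1 : (pivState hn A n).2 (s' : ℕ) = (pivState hn A s).2 (s' : ℕ) :=
    pivState_c_stable hn A n s (le_of_lt hsn) s' hs'
  rw [h1]
  exact hg.choose_spec.1 s' hs'

lemma pivInjBelow (hn : 0 < n) (A : Matrix (Fin n) (Fin n) F) (t : ℕ)
    (hall : ∀ s : ℕ, ∀ hsn : s < n, s < t → pivGood hn A s hsn) :
    ∀ s1 s2 : Fin n, (s1 : ℕ) < t → (s2 : ℕ) < t →
      (pivState hn A n).2 (s1 : ℕ) = (pivState hn A n).2 (s2 : ℕ) → s1 = s2 := by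
  intro s1 s2 h1 h2 heq
  rcases lt_trichotomy (s1 : ℕ) (s2 : ℕ) with h | h | h
  · exact absurd heq (pivP3 hn A s2 s2.isLt (hall s2 s2.isLt h2) s1 h)
  · exact Fin.ext h
  · exact absurd heq.symm (pivP3 hn A s1 s1.isLt (hall s1 s1.isLt h1) s2 h)

lemma pivGood_all (hn : 0 < n) (A : Matrix (Fin n) (Fin n) F) (hA : IsUnit A) :
    ∀ t : ℕ, ∀ ht : t < n, pivGood hn A t ht := by
  intro t
  induction t using Nat.strong_induction_on with
  | _ t IH =>
    intro ht
    have hall : ∀ s : ℕ, ∀ hsn : s < n, s < t → pivGood hn A s hsn :=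
      fun s hsn hst => IH s hst hsn
    set c : ℕ → Fin n := (pivState hn A n).2 with hcdef
    set M : ℕ → Matrix (Fin n) (Fin n) F := fun s => (pivState hn A s).1 with hMdef
    have hM0 : M 0 = A := rfl
    have hinj : ∀ s1 s2 : Fin n, (s1 : ℕ) < t → (s2 : ℕ) < t → c s1 = c s2 → s1 = s2 :=
      pivInjBelow hn A t hall
    have hstep : ∀ s : ℕ, ∀ hsn : s < n, s < t →
        M s ⟨s, hsn⟩ (c s) ≠ 0 ∧ M (s + 1) = dictPivot (M s) ⟨s, hsn⟩ (c s) := by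
      intro s hsn hst
      exact ⟨pivP2 hn A s hsn (hall s hsn hst), pivP1 hn A s hsn (hall s hsn hst)⟩
    have key := inv_rec A c M hM0 t (le_of_lt ht) hinj hstep
    by_contra hng
    have hng' : ∀ k : Fin n, (∀ s : Fin n, (s : ℕ) < t → (pivState hn A t).2 s ≠ k) →
        (pivState hn A t).1 ⟨t, ht⟩ k = 0 := by
      intro k hk
      by_contra h0
      exact hng ⟨k, hk, h0⟩
    have hd : IsUnit A.det := (Matrix.isUnit_iff_isUnit_det A).mp hA
    set y : Fin n → F := Pi.single (⟨t, ht⟩ : Fin n) 1 with hydef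
    set x : Fin n → F := A⁻¹ *ᵥ (-y) with hxdef
    have hAx : -(A *ᵥ x) = y := by
      rw [hxdef, Matrix.mulVec_mulVec, Matrix.mul_nonsing_inv A hd, Matrix.one_mulVec]
      simp
    have hw : wvAux c t x (-(A *ᵥ x)) ⟨t, ht⟩ = 1 := by
      rw [wvAux]
      simp only [if_neg (lt_irrefl t)]
      rw [hAx, hydef]
      exact Pi.single_eq_same _ _
    have hsum : ∑ j, M t ⟨t, ht⟩ j * zvAux c t x (-(A *ᵥ x)) j = 0 := by
      apply Finset.sum_eq_zero
      intro j _
      by_cases hex : ∃ s : Fin n, (s : ℕ) < t ∧ c s = j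
      · have hz : zvAux c t x (-(A *ᵥ x)) j = 0 := by
          rw [zvAux, dif_pos hex, hAx, hydef]
          apply Pi.single_eq_of_ne
          intro hcon
          have h2 := hex.choose_spec.1
          rw [hcon] at h2
          exact absurd h2 (lt_irrefl t)
        rw [hz, mul_zero]
      · have hM : M t ⟨t, ht⟩ j = 0 := by
          apply hng' j
          intro s hs hcon
          apply hex
          refine ⟨s, hs, ?_⟩
          rw [hcdef, pivState_c_stable hn A n t (le_of_lt ht) s hs]
          exact hcon
        rw [hM, zero_mul]
    have hfinal := key x ⟨t, ht⟩
    rw [hw, hsum, add_zero] at hfinal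
    exact one_ne_zero hfinal

end PivotAux

theorem isUnit_iff_exists_pivot_sequence {n : ℕ} {F : Type*} [Field F]
    (A : Matrix (Fin n) (Fin n) F) :
    IsUnit A ↔
      ∃ (σ : Equiv.Perm (Fin n)) (seq : Fin (n + 1) → Matrix (Fin n) (Fin n) F),
        seq 0 = A ∧
        ∀ t : Fin n,
          seq t.castSucc t (σ t) ≠ 0 ∧
          seq t.succ = dictPivot (seq t.castSucc) t (σ t) := by
  rcases Nat.eq_zero_or_pos n with h0 | hn
  · subst h0
    constructor
    · intro _
      exact ⟨1, fun _ => A, rfl, fun t => t.elim0⟩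
    · intro _
      apply (Matrix.isUnit_iff_isUnit_det A).mpr
      rw [Matrix.det_fin_zero]
      exact isUnit_one
  · constructor
    · intro hA
      have hall : ∀ t : ℕ, ∀ ht : t < n, pivGood hn A t ht := pivGood_all hn A hA
      set cfin : Fin n → Fin n := fun s => (pivState hn A n).2 (s : ℕ) with hcfin
      have hinj : Function.Injective cfin :=
        fun s1 s2 h => pivInjBelow hn A n (fun s hsn _ => hall s hsn) s1 s2 s1.isLt s2.isLt h
      have hbij : Function.Bijective cfin := Finite.injective_iff_bijective.mp hinj
      refine ⟨Equiv.ofBijective cfin hbij, fun u => (pivState hn A (u : ℕ)).1, ?_, ?_⟩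
      · show (pivState hn A ((0 : Fin (n + 1)) : ℕ)).1 = A
        simp only [Fin.val_zero]
        rfl
      · intro t
        have htn : (t : ℕ) < n := t.isLt
        have hg := hall t htn
        have hσ : Equiv.ofBijective cfin hbij t = (pivState hn A n).2 (t : ℕ) := rfl
        have hcast : ((Fin.castSucc t : Fin (n + 1)) : ℕ) = (t : ℕ) := rfl
        have hsucc : ((Fin.succ t : Fin (n + 1)) : ℕ) = (t : ℕ) + 1 := rfl
        have hmk : (⟨(t : ℕ), htn⟩ : Fin n) = t := Fin.eta t htn
        constructor
        · show (pivState hn A ((Fin.castSucc t : Fin (n + 1)) : ℕ)).1 t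
              (Equiv.ofBijective cfin hbij t) ≠ 0
          rw [hcast, hσ, ← hmk]
          exact pivP2 hn A (t : ℕ) htn hg
        · show (pivState hn A ((Fin.succ t : Fin (n + 1)) : ℕ)).1 =
            dictPivot (pivState hn A ((Fin.castSucc t : Fin (n + 1)) : ℕ)).1 t
              (Equiv.ofBijective cfin hbij t)
          rw [hcast, hsucc, hσ, ← hmk]
          exact pivP1 hn A (t : ℕ) htn hg
    · rintro ⟨σ, seq, h0, hsteps⟩
      exact seq_isUnit hn A σ seq h0 hsteps
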